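/- Let W_1, …, W_{N+1} be exchangeable real-valued random variables and define the conformal p-value p = (1 + Σ_{i=1}^{N} 1{W_i ≤ W_{N+1}})/(N+1). Then for every measurable function t : ℝ^{N+1} → [0,1] that is invariant under permutations of its arguments, P(p ≤ t(W_1, …, W_{N+1})) ≤ E[t(W_1, …, W_{N+1})]. In particular, P(p ≤ t) ≤ t for every constant t in [0,1]. -/
import Mathlib
open MeasureTheory ENNReal

noncomputable def cpRank {n : ℕ} (v : Fin n → ℝ) (k : Fin n) : ℕ :=
  (Finset.univ.filter (fun j => v j ≤ v k)).card

lemma cpRank_comp {n : ℕ} (v : Fin n → ℝ) (π : Equiv.Perm (Fin n)) (k : Fin n) :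
    cpRank (v ∘ π) k = cpRank v (π k) := by
  unfold cpRank
  apply Finset.card_bij' (fun j _ => π j) (fun j _ => π.symm j)
  · intro a ha; simp_all
  · intro a ha; simp_all
  · intro a ha; simp
  · intro a ha; simp

lemma cpRank_comb {n : ℕ} (v : Fin (n+1) → ℝ) (t : ℝ) (ht : 0 ≤ t) :
    ((Finset.univ.filter (fun k => (cpRank v k : ℝ) ≤ (n + 1) * t)).card : ℝ)
      ≤ (n + 1) * t := by
  set S := Finset.univ.filter (fun k => (cpRank v k : ℝ) ≤ (n + 1) * t) with hS
  rcases S.eq_empty_or_nonempty with h | h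
  · simp [h]; positivity
  · obtain ⟨k, hkS, hkmax⟩ := S.exists_max_image v h
    have hsub : S ⊆ Finset.univ.filter (fun j => v j ≤ v k) := by
      intro j hj
      simp only [Finset.mem_filter, Finset.mem_univ, true_and]
      exact hkmax j hj
    have h1 : (S.card : ℝ) ≤ (cpRank v k : ℝ) := by
      exact_mod_cast Finset.card_le_card hsub
    have h2 : (cpRank v k : ℝ) ≤ (n + 1) * t := by
      simpa [hS] using (Finset.mem_filter.mp hkS).2
    linarith

lemma cpRank_measurable {n : ℕ} (k : Fin n) :
    Measurable (fun v : Fin n → ℝ => (cpRank v k : ℝ)) := by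
  have : (fun v : Fin n → ℝ => (cpRank v k : ℝ))
      = fun v => ∑ j : Fin n, if v j ≤ v k then (1:ℝ) else 0 := by
    funext v
    rw [cpRank, Finset.card_filter, Nat.cast_sum]
    simp
  rw [this]
  apply Finset.measurable_sum
  intro j _
  exact Measurable.ite (measurableSet_le (measurable_pi_apply j) (measurable_pi_apply k))
    measurable_const measurable_const

lemma cpRank_last {N : ℕ} (v : Fin (N+1) → ℝ) :
    (cpRank v (Fin.last N) : ℝ)
      = 1 + (Set.ncard {i : Fin N | v i.castSucc ≤ v (Fin.last N)} : ℝ) := by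
  have h1 : {i : Fin N | v i.castSucc ≤ v (Fin.last N)}
      = ↑(Finset.univ.filter (fun i : Fin N => v i.castSucc ≤ v (Fin.last N))) := by
    ext i; simp
  rw [h1, Set.ncard_coe_finset]
  unfold cpRank
  rw [Finset.card_filter, Finset.card_filter, Fin.sum_univ_castSucc]
  push_cast
  simp
  ring

/-- If W₁, …, W_{N+1} are exchangeable and
p = (1 + Σ_{i=1}^N 1{W_i ≤ W_{N+1}})/(N+1), then for every measurable permutation-invariant
t : ℝ^{N+1} → [0,1] we have P(p ≤ t(W)) ≤ E[t(W)]; in particular P(p ≤ t) ≤ t for constant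
t ∈ [0,1]. -/
theorem conformal_pvalue_superuniform
    {Ω : Type*} [MeasurableSpace Ω] (μ : Measure Ω) [IsProbabilityMeasure μ]
    (N : ℕ) (W : Ω → Fin (N + 1) → ℝ) (hW : Measurable W)
    (hexch : ∀ π : Equiv.Perm (Fin (N + 1)),
      Measure.map (fun ω => W ω ∘ π) μ = Measure.map W μ)
    (p : Ω → ℝ)
    (hp : ∀ ω, p ω =
      (1 + (Set.ncard {i : Fin N | W ω i.castSucc ≤ W ω (Fin.last N)} : ℝ)) / (N + 1)) :
    (∀ t : (Fin (N + 1) → ℝ) → ℝ, Measurable t → (∀ v, t v ∈ Set.Icc (0 : ℝ) 1) →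
        (∀ (π : Equiv.Perm (Fin (N + 1))) v, t (v ∘ π) = t v) →
        μ {ω | p ω ≤ t (W ω)} ≤ ENNReal.ofReal (∫ ω, t (W ω) ∂μ)) ∧
      (∀ t : ℝ, t ∈ Set.Icc (0 : ℝ) 1 → μ {ω | p ω ≤ t} ≤ ENNReal.ofReal t) := by
  have main : ∀ t : (Fin (N + 1) → ℝ) → ℝ, Measurable t → (∀ v, t v ∈ Set.Icc (0 : ℝ) 1) →
      (∀ (π : Equiv.Perm (Fin (N + 1))) v, t (v ∘ π) = t v) →
      μ {ω | p ω ≤ t (W ω)} ≤ ENNReal.ofReal (∫ ω, t (W ω) ∂μ) := by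
    intro t ht htIcc htinv
    set ν : Measure (Fin (N + 1) → ℝ) := Measure.map W μ with hν
    have hNpos : (0 : ℝ) < (N : ℝ) + 1 := by positivity
    set A : Fin (N + 1) → Set (Fin (N + 1) → ℝ) :=
      fun k => {v | (cpRank v k : ℝ) ≤ ((N : ℝ) + 1) * t v} with hA
    have hAm : ∀ k, MeasurableSet (A k) := fun k =>
      measurableSet_le (cpRank_measurable k) (measurable_const.mul ht)
    -- the event as a preimage
    have hEv : {ω | p ω ≤ t (W ω)} = W ⁻¹' (A (Fin.last N)) := by
      ext ω
      simp only [Set.mem_setOf_eq, Set.mem_preimage, hA, hp ω, cpRank_last]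
      rw [div_le_iff₀ hNpos]
      constructor
      · intro h; linarith [h]
      · intro h; linarith [h]
    -- each A k has the same measure as the event
    have hsame : ∀ k, ν (A k) = μ {ω | p ω ≤ t (W ω)} := by
      intro k
      set π : Equiv.Perm (Fin (N + 1)) := Equiv.swap k (Fin.last N) with hπ
      have hπm : Measurable (fun ω => W ω ∘ π) := by
        exact (measurable_pi_lambda _ (fun i => measurable_pi_apply (π i))).comp hW
      have hpre : (fun ω => W ω ∘ π) ⁻¹' (A (Fin.last N)) = W ⁻¹' (A k) := by
        ext ω
        simp only [Set.mem_preimage, hA, Set.mem_setOf_eq, cpRank_comp, htinv]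
        have : π (Fin.last N) = k := Equiv.swap_apply_right _ _
        rw [this]
      calc ν (A k) = μ (W ⁻¹' (A k)) := Measure.map_apply hW (hAm k)
        _ = μ ((fun ω => W ω ∘ π) ⁻¹' (A (Fin.last N))) := by rw [hpre]
        _ = (Measure.map (fun ω => W ω ∘ π) μ) (A (Fin.last N)) :=
            (Measure.map_apply hπm (hAm (Fin.last N))).symm
        _ = ν (A (Fin.last N)) := by rw [hexch π]
        _ = μ (W ⁻¹' (A (Fin.last N))) := Measure.map_apply hW (hAm (Fin.last N))
        _ = μ {ω | p ω ≤ t (W ω)} := by rw [hEv]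
    -- sum over k
    have hsum : (((N : ℕ) + 1 : ℕ) : ℝ≥0∞) * μ {ω | p ω ≤ t (W ω)}
        = ∑ k : Fin (N + 1), ν (A k) := by
      rw [Finset.sum_congr rfl (fun k _ => hsame k)]
      simp [Finset.sum_const, nsmul_eq_mul]
    -- sum of measures as lintegral of count
    have hcount : ∑ k : Fin (N + 1), ν (A k)
        = ∫⁻ v, (∑ k : Fin (N + 1), (A k).indicator (fun _ => (1 : ℝ≥0∞)) v) ∂ν := by
      rw [lintegral_finset_sum]
      · refine Finset.sum_congr rfl (fun k _ => ?_)
        exact (lintegral_indicator_one (hAm k)).symm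
      · exact fun k _ => measurable_one.indicator (hAm k)
    -- pointwise bound
    have hpt : ∀ v, (∑ k : Fin (N + 1), (A k).indicator (fun _ => (1 : ℝ≥0∞)) v)
        ≤ ENNReal.ofReal (((N : ℝ) + 1) * t v) := by
      intro v
      have h0 : 0 ≤ t v := (htIcc v).1
      have hcard := cpRank_comb v (t v) h0
      have hsum' : (∑ k : Fin (N + 1), (A k).indicator (fun _ => (1 : ℝ≥0∞)) v)
          = ((Finset.univ.filter (fun k => (cpRank v k : ℝ) ≤ ((N : ℝ) + 1) * t v)).card
              : ℝ≥0∞) := by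
        rw [Finset.card_filter, Nat.cast_sum]
        refine Finset.sum_congr rfl (fun k _ => ?_)
        by_cases hk : (cpRank v k : ℝ) ≤ ((N : ℝ) + 1) * t v
        · simp [Set.indicator, hA, hk]
        · simp [Set.indicator, hA, hk]
      rw [hsum']
      calc ((Finset.univ.filter (fun k => (cpRank v k : ℝ) ≤ ((N : ℝ) + 1) * t v)).card
              : ℝ≥0∞)
          = ENNReal.ofReal ((Finset.univ.filter
              (fun k => (cpRank v k : ℝ) ≤ ((N : ℝ) + 1) * t v)).card : ℝ) := by
            rw [ENNReal.ofReal_natCast]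
        _ ≤ ENNReal.ofReal (((N : ℝ) + 1) * t v) := ENNReal.ofReal_le_ofReal hcard
    -- integrability
    have hprob : IsProbabilityMeasure ν := Measure.isProbabilityMeasure_map hW.aemeasurable
    have hint : Integrable t ν := by
      refine (integrable_const (1 : ℝ)).mono' ht.aestronglyMeasurable ?_
      filter_upwards with v
      rw [Real.norm_eq_abs, abs_le]
      exact ⟨by linarith [(htIcc v).1], (htIcc v).2⟩
    have hIntEq : ∫⁻ v, ENNReal.ofReal (t v) ∂ν = ENNReal.ofReal (∫ v, t v ∂ν) := by
      rw [← ofReal_integral_eq_lintegral_ofReal hint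
        (Filter.Eventually.of_forall (fun v => (htIcc v).1))]
    have hmap : ∫ v, t v ∂ν = ∫ ω, t (W ω) ∂μ := by
      rw [hν, integral_map hW.aemeasurable ht.aestronglyMeasurable]
    -- put together
    have key : (((N : ℕ) + 1 : ℕ) : ℝ≥0∞) * μ {ω | p ω ≤ t (W ω)}
        ≤ (((N : ℕ) + 1 : ℕ) : ℝ≥0∞) * ENNReal.ofReal (∫ ω, t (W ω) ∂μ) := by
      rw [hsum, hcount]
      calc ∫⁻ v, (∑ k : Fin (N + 1), (A k).indicator (fun _ => (1 : ℝ≥0∞)) v) ∂ν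
          ≤ ∫⁻ v, ENNReal.ofReal (((N : ℝ) + 1) * t v) ∂ν := lintegral_mono hpt
        _ = ∫⁻ v, ENNReal.ofReal ((N : ℝ) + 1) * ENNReal.ofReal (t v) ∂ν := by
            refine lintegral_congr (fun v => ?_)
            rw [ENNReal.ofReal_mul (le_of_lt hNpos)]
        _ = ENNReal.ofReal ((N : ℝ) + 1) * ∫⁻ v, ENNReal.ofReal (t v) ∂ν :=
            lintegral_const_mul _ ht.ennreal_ofReal
        _ = (((N : ℕ) + 1 : ℕ) : ℝ≥0∞) * ENNReal.ofReal (∫ ω, t (W ω) ∂μ) := by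
            rw [hIntEq, hmap]
            congr 1
            rw [← ENNReal.ofReal_natCast (N + 1)]
            push_cast
            rfl
    have hc0 : (((N : ℕ) + 1 : ℕ) : ℝ≥0∞) ≠ 0 := by
      simp
    have hctop : (((N : ℕ) + 1 : ℕ) : ℝ≥0∞) ≠ ⊤ := by
      simp
    exact (ENNReal.mul_le_mul_iff_right hc0 hctop).mp key
  refine ⟨main, fun t htIcc => ?_⟩
  have := main (fun _ => t) measurable_const (fun _ => htIcc) (fun _ _ => rfl)
  simpa using this
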